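/- A permutation π of {1,...,n} satisfies π ⊕ 1 = π (i.e., its toric class has exactly one element) if and only if π is a natural permutation ν_{k,n} for some k coprime to n+1. Consequently, the number of such permutations is φ(n+1), Euler's totient of n+1. -/

import Mathlib

/-- `π ∈ S_n` is a natural permutation: for some `j` invertible mod `n+1` (with inverse
`k`), the letter of `π` at position `i` is `i·j mod (n+1)` (positions and letters taken
in `{1,…,n}`). -/
def IsNaturalPerm (n : ℕ) (π : Equiv.Perm (Fin n)) : Prop :=
  ∃ j k : ZMod (n + 1), k * j = 1 ∧
    ∀ i : Fin n, (((π i : ℕ) + 1 : ℕ) : ZMod (n + 1)) =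
      (((i : ℕ) + 1 : ℕ) : ZMod (n + 1)) * j
/-- The circular word `0π₁⋯π_n` of a permutation `π ∈ S_n`, as a function on
`ZMod (n+1)`: position `0` holds the letter `0` and position `i` (for `1 ≤ i ≤ n`)
holds the letter `π(i)`. -/
def torHat {n : ℕ} (π : Equiv.Perm (Fin n)) (x : ZMod (n + 1)) : ZMod (n + 1) :=
  if h : x.val = 0 then 0
  else (((π ⟨x.val - 1, by have := ZMod.val_lt x; omega⟩ : Fin n) : ℕ) + 1 : ℕ)

/-- `π` and `μ` are torically equivalent: the circular word of `μ` is obtained from that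
of `π` by adding a constant `m` to all letters modulo `n+1` (and re-reading from the
position just after the letter `0`, i.e. rotating positions by some `c`). -/
def ToricEquiv {n : ℕ} (π μ : Equiv.Perm (Fin n)) : Prop :=
  ∃ m c : ZMod (n + 1), ∀ x : ZMod (n + 1), torHat μ x = torHat π (x + c) + m

section Aux

variable {n : ℕ}

lemma val_natCast_succ (i : Fin n) :
    ((((i : ℕ) + 1 : ℕ) : ZMod (n + 1)).val) = (i : ℕ) + 1 :=
  ZMod.val_cast_of_lt (by omega)

lemma natCast_succ_ne_zero (i : Fin n) :
    ((((i : ℕ) + 1 : ℕ)) : ZMod (n + 1)) ≠ 0 := by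
  intro h
  have := val_natCast_succ i
  rw [h] at this
  simp [ZMod.val_zero] at this

lemma torHat_zero (π : Equiv.Perm (Fin n)) : torHat π 0 = 0 := by
  simp [torHat]

lemma torHat_succ (π : Equiv.Perm (Fin n)) (i : Fin n) :
    torHat π ((((i : ℕ) + 1 : ℕ)) : ZMod (n + 1)) = (((π i : ℕ) + 1 : ℕ) : ZMod (n + 1)) := by
  rw [torHat, dif_neg (by rw [val_natCast_succ]; omega)]
  have harg : (⟨((((i : ℕ) + 1 : ℕ) : ZMod (n + 1)).val - 1), by
      have := ZMod.val_lt ((((i : ℕ) + 1 : ℕ)) : ZMod (n + 1)); have := i.isLt; omega⟩ : Fin n) = i :=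
    Fin.ext (by simp only [val_natCast_succ]; omega)
  exact congrArg (fun t : Fin n => (((π t : ℕ) + 1 : ℕ) : ZMod (n + 1))) harg

/-- the natural permutation associated to a unit, as a map -/
lemma mul_unit_ne_zero (u : (ZMod (n + 1))ˣ) (i : Fin n) :
    ((((i : ℕ) + 1 : ℕ) : ZMod (n + 1)) * u) ≠ 0 := by
  rw [Ne, Units.mul_left_eq_zero]
  exact natCast_succ_ne_zero i

lemma mul_unit_val_ne_zero (u : (ZMod (n + 1))ˣ) (i : Fin n) :
    ((((i : ℕ) + 1 : ℕ) : ZMod (n + 1)) * u).val ≠ 0 := by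
  simpa [ZMod.val_eq_zero] using mul_unit_ne_zero u i

def natMap (u : (ZMod (n + 1))ˣ) (i : Fin n) : Fin n :=
  ⟨(((((i : ℕ) + 1 : ℕ)) : ZMod (n + 1)) * u).val - 1, by
    have h2 := mul_unit_val_ne_zero u i
    have h3 := ZMod.val_lt (((((i : ℕ) + 1 : ℕ)) : ZMod (n + 1)) * (u : ZMod (n + 1)))
    omega⟩

lemma natMap_cast (u : (ZMod (n + 1))ˣ) (i : Fin n) :
    ((((natMap u i : Fin n) : ℕ) + 1 : ℕ) : ZMod (n + 1)) =
      ((((i : ℕ) + 1 : ℕ)) : ZMod (n + 1)) * u := by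
  have h2 := mul_unit_val_ne_zero u i
  show (((((((i : ℕ) + 1 : ℕ)) : ZMod (n + 1)) * u).val - 1 + 1 : ℕ) : ZMod (n + 1)) = _
  rw [Nat.sub_add_cancel (by omega)]
  simp [ZMod.natCast_val, ZMod.cast_id]

lemma natMap_inv (u : (ZMod (n + 1))ˣ) (i : Fin n) :
    natMap u⁻¹ (natMap u i) = i := by
  ext
  show ((((((natMap u i : Fin n) : ℕ) + 1 : ℕ)) : ZMod (n + 1)) * (u⁻¹ : (ZMod (n+1))ˣ)).val - 1 = (i : ℕ)
  rw [natMap_cast, mul_assoc, Units.mul_inv, mul_one, val_natCast_succ]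
  omega

/-- the natural permutation associated to a unit -/
def natPerm (u : (ZMod (n + 1))ˣ) : Equiv.Perm (Fin n) where
  toFun := natMap u
  invFun := natMap u⁻¹
  left_inv := natMap_inv u
  right_inv := fun i => by
    have := natMap_inv u⁻¹ i
    rwa [inv_inv] at this

lemma natPerm_isNatural (u : (ZMod (n + 1))ˣ) : IsNaturalPerm n (natPerm u) :=
  ⟨(u : ZMod (n + 1)), ((u⁻¹ : (ZMod (n+1))ˣ) : ZMod (n + 1)), by
    rw [Units.inv_mul], fun i => natMap_cast u i⟩

lemma isNatural_eq_natPerm (π : Equiv.Perm (Fin n)) (h : IsNaturalPerm n π) :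
    ∃ u : (ZMod (n + 1))ˣ, π = natPerm u := by
  obtain ⟨j, k, hkj, hπ⟩ := h
  refine ⟨⟨j, k, by rw [mul_comm]; exact hkj, hkj⟩, ?_⟩
  ext i
  have h1 := hπ i
  have h2 := natMap_cast (n := n) ⟨j, k, by rw [mul_comm]; exact hkj, hkj⟩ i
  rw [← h1] at h2
  have h3 : (((π i : ℕ) + 1 : ℕ) : ZMod (n + 1)).val = (π i : ℕ) + 1 :=
    ZMod.val_cast_of_lt (by have := (π i).isLt; omega)
  have h4 : (((((natPerm (n := n) ⟨j, k, by rw [mul_comm]; exact hkj, hkj⟩) i : Fin n) : ℕ) + 1 : ℕ) : ZMod (n + 1)).val = ((natPerm (n := n) ⟨j, k, by rw [mul_comm]; exact hkj, hkj⟩) i : ℕ) + 1 :=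
    ZMod.val_cast_of_lt (by
      have := ((natPerm (n := n) ⟨j, k, by rw [mul_comm]; exact hkj, hkj⟩) i).isLt; omega)
  have h5 := congrArg ZMod.val h2
  show (π i : ℕ) = _
  rw [h3] at h5
  rw [show ((natPerm (n := n) ⟨j, k, by rw [mul_comm]; exact hkj, hkj⟩) i) = natMap ⟨j, k, by rw [mul_comm]; exact hkj, hkj⟩ i from rfl] at h4 ⊢
  rw [h4] at h5
  omega

lemma natPerm_injective : Function.Injective (natPerm (n := n)) := by
  intro u v h
  ext1
  rcases n with _ | m
  · haveI : Subsingleton (ZMod (0 + 1)) := ⟨fun a b => Subsingleton.elim (α := Fin 1) a b⟩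
    exact Subsingleton.elim _ _
  · have hi : ((natPerm u) (⟨0, by omega⟩ : Fin (m+1))) = ((natPerm v) (⟨0, by omega⟩ : Fin (m+1))) := by rw [h]
    have h1 := natMap_cast (n := m + 1) u ⟨0, by omega⟩
    have h2 := natMap_cast (n := m + 1) v ⟨0, by omega⟩
    rw [show (natMap u (⟨0, by omega⟩ : Fin (m+1))) = (natPerm u) ⟨0, by omega⟩ from rfl, hi] at h1
    rw [show (natMap v (⟨0, by omega⟩ : Fin (m+1))) = (natPerm v) ⟨0, by omega⟩ from rfl] at h2
    rw [h1] at h2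
    have h3 : (v : ZMod (m + 1 + 1)) = u := by simpa using h2.symm
    exact h3.symm

end Aux

/-- `π ⊕ 1 = π` (toric class of size one) iff `π` is a natural permutation; the number
of such permutations is `φ(n+1)`. -/
theorem stmt_15 (n : ℕ) :
    (∀ π : Equiv.Perm (Fin n),
      (∃ c : ZMod (n + 1), ∀ x : ZMod (n + 1), torHat π x = torHat π (x + c) + 1) ↔
        IsNaturalPerm n π) ∧
    {π : Equiv.Perm (Fin n) | IsNaturalPerm n π}.ncard = Nat.totient (n + 1) := by
  constructor
  · intro π
    constructor
    · rintro ⟨c, h⟩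
      -- step: torHat π (-(t) * c) = t
      have step : ∀ t : ℕ, torHat π (-(t : ZMod (n + 1)) * c) = (t : ZMod (n + 1)) := by
        intro t
        induction t with
        | zero => simpa using torHat_zero π
        | succ t ih =>
          have hx := h (-((t + 1 : ℕ) : ZMod (n + 1)) * c)
          have harg : -((t + 1 : ℕ) : ZMod (n + 1)) * c + c = -(t : ZMod (n + 1)) * c := by
            push_cast; ring
          rw [harg, ih] at hx
          rw [hx]; push_cast; ring
      have hval : ∀ x : ZMod (n + 1), ((x.val : ℕ) : ZMod (n + 1)) = x := fun x => by
        simp [ZMod.natCast_val, ZMod.cast_id]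
      -- multiplication by c is injective
      have hinj : Function.Injective (fun x : ZMod (n + 1) => x * c) := by
        intro x y hxy
        have h1 := step x.val
        have h2 := step y.val
        rw [hval x] at h1
        rw [hval y] at h2
        have : -x * c = -y * c := by
          simp only at hxy
          rw [neg_mul, neg_mul, hxy]
        rw [this, h2] at h1
        exact h1.symm
      have hsurj : Function.Surjective (fun x : ZMod (n + 1) => x * c) :=
        Finite.surjective_of_injective hinj
      obtain ⟨b, hb⟩ := hsurj 1
      have hu : IsUnit c := IsUnit.of_mul_eq_one (a := c) b (by rw [mul_comm]; exact hb)
      obtain ⟨u, hu⟩ := hu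
      set j : ZMod (n + 1) := -((u⁻¹ : (ZMod (n+1))ˣ) : ZMod (n + 1)) with hj
      have hjc : j * c = -1 := by
        rw [hj, ← hu, neg_mul, Units.inv_mul]
      have formula : ∀ x : ZMod (n + 1), torHat π x = x * j := by
        intro x
        have h1 := step ((x * j).val)
        rw [hval (x * j)] at h1
        have : -(x * j) * c = x := by
          rw [neg_mul, mul_assoc, hjc]; ring
        rw [this] at h1
        exact h1
      refine ⟨j, -c, ?_, ?_⟩
      · have hh : -c * j = -(j * c) := by ring
        rw [hh, hjc, neg_neg]
      · intro i
        have := formula ((((i : ℕ) + 1 : ℕ)) : ZMod (n + 1))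
        rw [torHat_succ] at this
        exact this
    · rintro ⟨j, k, hkj, hπ⟩
      have hval : ∀ x : ZMod (n + 1), ((x.val : ℕ) : ZMod (n + 1)) = x := fun x => by
        simp [ZMod.natCast_val, ZMod.cast_id]
      have formula : ∀ x : ZMod (n + 1), torHat π x = x * j := by
        intro x
        by_cases hx : x.val = 0
        · have hx0 : x = 0 := by rwa [ZMod.val_eq_zero] at hx
          rw [hx0, torHat_zero, zero_mul]
        · have hlt := ZMod.val_lt x
          set i : Fin n := ⟨x.val - 1, by omega⟩ with hi
          have hxi : x = ((((i : ℕ) + 1 : ℕ)) : ZMod (n + 1)) := by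
            rw [hi]
            show x = (((x.val - 1 + 1 : ℕ)) : ZMod (n + 1))
            rw [Nat.sub_add_cancel (by omega), hval]
          rw [hxi, torHat_succ, hπ i]
      refine ⟨-k, fun x => ?_⟩
      rw [formula, formula]
      have : (x + -k) * j = x * j - k * j := by ring
      rw [this, hkj]
      ring
  · have hset : {π : Equiv.Perm (Fin n) | IsNaturalPerm n π} = Set.range (natPerm (n := n)) := by
      ext π
      constructor
      · intro h
        obtain ⟨u, hu⟩ := isNatural_eq_natPerm π h
        exact ⟨u, hu.symm⟩
      · rintro ⟨u, rfl⟩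
        exact natPerm_isNatural u
    rw [hset, ← Nat.card_coe_set_eq, Nat.card_range_of_injective natPerm_injective,
      Nat.card_eq_fintype_card, ZMod.card_units_eq_totient]
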